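/- Let G be a strongly connected digraph and A a schedule on G. Then A is simultaneously a reduce-scatter schedule and a shortest-path schedule if and only if both: (1) ((v,C),(u,w),t) ∈ A if and only if d(u,v) = d(w,v)+1 = D(G)+1−t; and (2) for all distinct u,v ∈ V_G, the collection of chunks E_{u,v} = {C : ((v,C),(u,w),t) ∈ A for some w and t} covers the shard, i.e., [0,1) = ⋃_{C∈E_{u,v}} C. -/

import Mathlib

open MeasureTheory

namespace Collective

/-- A communication tuple `((w,C),(u,v),t)`. -/
abbrev Tup (V : Type*) := V × Set ℝ × (V × V) × ℕ

/-- A schedule is a set of communication tuples. -/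
abbrev Sched (V : Type*) := Set (Tup V)

/-- The data shard, identified with the interval `[0,1)`. -/
def shard : Set ℝ := Set.Ico (0 : ℝ) 1

/-- `A` is a valid (finite) schedule on the digraph with edge relation `E`:
every tuple uses an edge, its chunk is a measurable subset of the shard, and
its communication step is at least `1`. -/
def IsSched {V : Type*} (E : V → V → Prop) (A : Sched V) : Prop :=
  A.Finite ∧ ∀ p ∈ A, E p.2.2.1.1 p.2.2.1.2 ∧ p.2.1 ⊆ shard ∧
    MeasurableSet p.2.1 ∧ 1 ≤ p.2.2.2

/-- The maximum communication step occurring in a schedule. -/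
noncomputable def tmax {V : Type*} (A : Sched V) : ℕ :=
  sSup {t | ∃ p ∈ A, p.2.2.2 = t}

/-- `A` is a reduce-scatter schedule. -/
def IsReduceScatter {V : Type*} (A : Sched V) : Prop :=
  ∀ u v : V, u ≠ v → ∀ x ∈ shard,
    ∃ (m : ℕ) (w : Fin (m + 1) → V) (C : Fin m → Set ℝ) (t : Fin m → ℕ),
      w 0 = u ∧ w (Fin.last m) = v ∧ StrictMono t ∧
      ∀ i : Fin m, (v, C i, (w i.castSucc, w i.succ), t i) ∈ A ∧ x ∈ C i

/-- `A` is an allgather schedule. -/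
def IsAllgather {V : Type*} (A : Sched V) : Prop :=
  ∀ u v : V, u ≠ v → ∀ x ∈ shard,
    ∃ (m : ℕ) (w : Fin (m + 1) → V) (C : Fin m → Set ℝ) (t : Fin m → ℕ),
      w 0 = u ∧ w (Fin.last m) = v ∧ StrictMono t ∧
      ∀ i : Fin m, (u, C i, (w i.castSucc, w i.succ), t i) ∈ A ∧ x ∈ C i

/-- A digraph is `d`-regular if every vertex has out-degree `d` and in-degree `d`. -/
def IsRegular {V : Type*} (E : V → V → Prop) (d : ℕ) : Prop :=
  ∀ v : V, {w | E v w}.ncard = d ∧ {w | E w v}.ncard = d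

/-- Node latency `T_L(A) = t_max · α`. -/
noncomputable def latT {V : Type*} (α : ℝ) (A : Sched V) : ℝ := (tmax A : ℝ) * α

/-- Total chunk length sent over edge `e` at step `t`. -/
noncomputable def edgeLoad {V : Type*} (A : Sched V) (e : V × V) (t : ℕ) : ℝ :=
  ∑ᶠ p ∈ {p : Tup V | p ∈ A ∧ p.2.2.1 = e ∧ p.2.2.2 = t}, (volume p.2.1).toReal

/-- Bandwidth runtime of step `t`:
`T_B(A_t,M,B) = (d/B)·(M/N)·max_{(u,v)∈E} Σ_{((w,C),(u,v),t)∈A_t} |C|`. -/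
noncomputable def stepT {V : Type*} (E : V → V → Prop) (d : ℕ) (M B : ℝ)
    (A : Sched V) (t : ℕ) : ℝ :=
  ((d : ℝ) / B) * (M / (Nat.card V : ℝ)) *
    sSup ((fun e => edgeLoad A e t) '' {e : V × V | E e.1 e.2})

/-- Bandwidth runtime `T_B(A,M,B) = Σ_{t=1}^{t_max} T_B(A_t,M,B)`. -/
noncomputable def bwT {V : Type*} (E : V → V → Prop) (d : ℕ) (M B : ℝ)
    (A : Sched V) : ℝ :=
  ∑ t ∈ Finset.Icc 1 (tmax A), stepT E d M B A t

/-- There is a directed walk of length `n` from `u` to `v`. -/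
def HasWalk {V : Type*} (E : V → V → Prop) (u v : V) (n : ℕ) : Prop :=
  ∃ w : Fin (n + 1) → V, w 0 = u ∧ w (Fin.last n) = v ∧
    ∀ i : Fin n, E (w i.castSucc) (w i.succ)

/-- Strong connectivity. -/
def StronglyConnected {V : Type*} (E : V → V → Prop) : Prop :=
  ∀ u v : V, ∃ n, HasWalk E u v n

/-- Directed graph distance: the length of a shortest directed walk. -/
noncomputable def dist {V : Type*} (E : V → V → Prop) (u v : V) : ℕ :=
  sInf {n | HasWalk E u v n}

/-- Diameter `D(G) = max_{u,v} d(u,v)`. -/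
noncomputable def diam {V : Type*} (E : V → V → Prop) : ℕ :=
  sSup {n | ∃ u v : V, dist E u v = n}

/-- `A` is a shortest-path (reduce-scatter style) schedule:
`((v,C),(u,w),t) ∈ A` iff `d(u,v) = d(w,v)+1 = D(G)+1−t`. -/
def IsShortestPathSched {V : Type*} (E : V → V → Prop) (A : Sched V) : Prop :=
  (∀ (v : V) (C : Set ℝ) (u w : V) (t : ℕ), (v, C, (u, w), t) ∈ A →
      dist E u v = dist E w v + 1 ∧ dist E u v + t = diam E + 1) ∧
  (∀ (v u w : V) (t : ℕ), E u w → dist E u v = dist E w v + 1 →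
      dist E u v + t = diam E + 1 → ∃ C : Set ℝ, (v, C, (u, w), t) ∈ A)

/-- The transpose digraph. -/
def transpose {V : Type*} (E : V → V → Prop) : V → V → Prop := fun u v => E v u

/-- The reverse schedule `A^T`: `((w,C),(v,u),t_max−t+1) ∈ A^T` iff `((w,C),(u,v),t) ∈ A`. -/
noncomputable def reverseSched {V : Type*} (A : Sched V) : Sched V :=
  (fun q : Tup V => (q.1, q.2.1, (q.2.2.1.2, q.2.2.1.1), tmax A + 1 - q.2.2.2)) '' A

/-- The schedule obtained by relabeling vertices along `f`. -/
def mapSched {V : Type*} (f : V ≃ V) (A : Sched V) : Sched V :=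
  (fun q : Tup V => (f q.1, q.2.1, (f q.2.2.1.1, f q.2.2.1.2), q.2.2.2)) '' A

/-- The vertex set of the line graph `L(G)`: the edges of `G`. -/
def lineV {V : Type*} (E : V → V → Prop) : Type _ := {e : V × V // E e.1 e.2}

/-- The edge relation of the line graph: `uu' → vv'` iff `u' = v`. -/
def lineE {V : Type*} (E : V → V → Prop) : lineV E → lineV E → Prop :=
  fun e f => e.1.2 = f.1.1

/-- The line-graph-expanded schedule `A_{L(G)}`. -/
noncomputable def lineSched {V : Type*} (E : V → V → Prop) (A : Sched V) :
    Sched (lineV E) :=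
  {p | (∃ (v v' w u u' : V) (C : Set ℝ) (t : ℕ)
          (hvv' : E v v') (hwu : E w u) (huu' : E u u'),
          (v, C, (u, u'), t) ∈ A ∧ (v, v') ≠ (w, u) ∧
          p = (⟨(v, v'), hvv'⟩, C, (⟨(w, u), hwu⟩, ⟨(u, u'), huu'⟩), t))
     ∨ (∃ (u v v' : V) (huv : E u v) (hvv' : E v v'),
          (u, v) ≠ (v, v') ∧
          p = (⟨(v, v'), hvv'⟩, shard, (⟨(u, v), huv⟩, ⟨(v, v'), hvv'⟩), tmax A + 1))}

/-- A digraph bundled with a schedule, used to iterate line graph expansion. -/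
structure Alg : Type 1 where
  V : Type
  E : V → V → Prop
  A : Sched V

/-- One application of line graph expansion to a bundled algorithm. -/
noncomputable def lineAlg (G : Alg) : Alg :=
  ⟨lineV G.E, lineE G.E, lineSched G.E G.A⟩

/-- The degree-expanded digraph `G*n`. -/
def degE {V : Type*} (E : V → V → Prop) (n : ℕ) :
    (V × Fin n) → (V × Fin n) → Prop :=
  fun a b => E a.1 b.1

/-- The degree-expanded schedule `A_{G*n}`, relative to an enumeration `enum` of the
out-edges of each vertex of `G*n`. -/
noncomputable def degSched {V : Type*} (A : Sched V) (n d : ℕ)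
    (enum : V × Fin n → Fin (n * d) → V × Fin n) : Sched (V × Fin n) :=
  {p | (∃ (u : V) (i j : Fin n) (β : Fin (n * d)), i ≠ j ∧
          p = ((u, j),
               Set.Ico (((β : ℕ) : ℝ) / ((n : ℝ) * (d : ℝ)))
                 ((((β : ℕ) : ℝ) + 1) / ((n : ℝ) * (d : ℝ))),
               ((u, i), enum (u, i) β), 1))
     ∨ (∃ (w u v : V) (C : Set ℝ) (t : ℕ) (i j : Fin n),
          (w, C, (u, v), t) ∈ A ∧ p = ((w, j), C, ((u, i), (v, j)), t + 1))}

/-- The edge relation of the Cartesian power `G^{□n}`. -/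
def powE {V : Type*} (E : V → V → Prop) (n : ℕ) :
    (Fin n → V) → (Fin n → V) → Prop :=
  fun u v => ∃ j : Fin n, E (u j) (v j) ∧ ∀ k : Fin n, k ≠ j → u k = v k

/-- Cyclic rotation of coordinates by `i`. -/
def rot {V : Type*} {n : ℕ} (i : Fin n) (v : Fin n → V) : Fin n → V :=
  fun k => v (k - i)

/-- The Cartesian power allgather schedule `A_{G^{□n}}`: the `i`-th of the `n` schedules
`A^{(i)}` (a coordinate rotation of `A^{(1)}`) is run on the `i`-th equal subshard. -/
noncomputable def powSched {V : Type*} (A : Sched V) (n : ℕ) : Sched (Fin n → V) :=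
  {p | ∃ (i j : Fin n) (w u v : V) (C : Set ℝ) (t : ℕ) (a b : Fin n → V),
        (w, C, (u, v), t) ∈ A ∧ a j = w ∧ b j = u ∧ (∀ k : Fin n, j < k → a k = b k) ∧
        p = (rot i a, (fun x : ℝ => (((i : ℕ) : ℝ) + x) / (n : ℝ)) '' C,
             (rot i b, rot i (Function.update b j v)), t + (j : ℕ) * tmax A)}

/-- The edge relation of the Cartesian product `G₁□⋯□G_n` of a family of digraphs. -/
def boxE {n : ℕ} {V : Fin n → Type*} (E : ∀ i, V i → V i → Prop) :
    (∀ i, V i) → (∀ i, V i) → Prop :=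
  fun u v => ∃ j : Fin n, E j (u j) (v j) ∧ ∀ k : Fin n, k ≠ j → u k = v k

/-- The generalized Kautz digraph `Π_{d,m}` on `ℤ/mℤ`:
`x → y` iff `y ≡ −d·x − a (mod m)` for some `a ∈ {1,…,d}`. -/
def kautzE (d m : ℕ) : ZMod m → ZMod m → Prop :=
  fun x y => ∃ a : ℕ, 1 ≤ a ∧ a ≤ d ∧ y = -(d : ZMod m) * x - (a : ZMod m)

end Collective
namespace Collective

/-- a schedule `A` on a strongly connected digraph is simultaneously a
reduce-scatter schedule and a shortest-path schedule iff (1) it satisfies the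
shortest-path condition and (2) for all distinct `u,v` the chunks `A` sends out of `u`
with destination `v` cover the whole shard. -/

private lemma cons_strictMono' {m : ℕ} {t : ℕ} {t' : Fin (m+1) → ℕ}
    (h0 : t < t' 0) (h : StrictMono t') :
    StrictMono (Fin.cons t t' : Fin (m+2) → ℕ) := by
  intro i j hij
  rcases Fin.eq_zero_or_eq_succ j with rfl | ⟨j', rfl⟩
  · exact absurd hij (Fin.not_lt_zero i)
  rcases Fin.eq_zero_or_eq_succ i with rfl | ⟨i', rfl⟩
  · simpa using lt_of_lt_of_le h0 (h.monotone (Fin.zero_le j'))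
  · simp only [Fin.cons_succ]
    exact h (Fin.succ_lt_succ_iff.mp hij)

theorem shortest_path_reduce_scatter_iff {V : Type*} [Finite V]
    (E : V → V → Prop) (A : Sched V)
    (hsc : StronglyConnected E) (hA : IsSched E A) :
    (IsReduceScatter A ∧ IsShortestPathSched E A) ↔
      (IsShortestPathSched E A ∧
        ∀ u v : V, u ≠ v →
          shard = ⋃₀ {C : Set ℝ | ∃ (w : V) (t : ℕ), (v, C, (u, w), t) ∈ A}) := by
  constructor
  · rintro ⟨hrs, hsp⟩
    refine ⟨hsp, fun u v huv => ?_⟩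
    apply Set.Subset.antisymm
    · intro x hx
      obtain ⟨m, w, C, t, hw0, hwl, hmono, hmem⟩ := hrs u v huv x hx
      cases m with
      | zero =>
        exact absurd (hw0 ▸ hwl ▸ rfl) huv
      | succ m =>
        obtain ⟨hmemA, hxC⟩ := hmem 0
        refine ⟨C 0, ⟨w (0 : Fin (m+1)).succ, t 0, ?_⟩, hxC⟩
        simpa [hw0] using hmemA
    · rintro x ⟨C, ⟨w, t, hmem⟩, hx⟩
      exact (hA.2 _ hmem).2.1 hx
  · rintro ⟨hsp, hcov⟩
    refine ⟨?_, hsp⟩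
    intro u v huv x hx
    have key : ∀ n u, u ≠ v → dist E u v = n →
        ∃ (m : ℕ) (w : Fin (m + 1) → V) (C : Fin m → Set ℝ) (t : Fin m → ℕ),
          w 0 = u ∧ w (Fin.last m) = v ∧ StrictMono t ∧
          ∀ i : Fin m, (v, C i, (w i.castSucc, w i.succ), t i) ∈ A ∧ x ∈ C i := by
      intro n
      induction n using Nat.strong_induction_on with
      | _ n ih =>
        intro u huv hn
        have hx' := hx
        rw [hcov u v huv] at hx'
        obtain ⟨C, ⟨w', t, hmem⟩, hxC⟩ := hx'
        obtain ⟨hd1, hd2⟩ := hsp.1 v C u w' t hmem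
        by_cases hw'v : w' = v
        · subst hw'v
          refine ⟨1, ![u, w'], ![C], ![t],
            rfl, rfl, fun i j h => absurd (Subsingleton.elim i j ▸ h) (lt_irrefl j), ?_⟩
          intro i
          fin_cases i
          simpa using ⟨hmem, hxC⟩
        · have hlt : dist E w' v < n := by omega
          obtain ⟨m, w2, C2, t2, h0, hl, hmono, hmem2⟩ := ih _ hlt w' hw'v rfl
          cases m with
          | zero =>
            exact absurd (h0 ▸ hl ▸ rfl) hw'v
          | succ m =>
            have hfirst := (hmem2 0).1
            rw [Fin.castSucc_zero, h0] at hfirst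
            obtain ⟨hd1', hd2'⟩ := hsp.1 v (C2 0) w' (w2 (0 : Fin (m+1)).succ) (t2 0) hfirst
            have htlt : t < t2 0 := by omega
            refine ⟨m + 2, Fin.cons u w2, Fin.cons C C2, Fin.cons t t2, rfl, ?_,
              cons_strictMono' htlt hmono, ?_⟩
            · rw [← Fin.succ_last, Fin.cons_succ, hl]
            · intro i
              rcases Fin.eq_zero_or_eq_succ i with rfl | ⟨j, rfl⟩
              · simpa [h0] using ⟨hmem, hxC⟩
              · have e : (Fin.succ j).castSucc = (Fin.castSucc j).succ := rfl
                simp only [e, Fin.cons_succ]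
                exact hmem2 j
    exact key (dist E u v) u huv rfl



end Collective
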